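/- Let a ≥ 1, n ≥ 1 be integers and let F(n,k) = (−1)^k · C(n,k) · C(an+1+k, (a−1)n+1+k)/(an+1+k) and H(n,k) = −F(n,k) · k·((a−1)n+1+k)/(n·(an+1)), both rational numbers. Then for every natural number k, F(n,k) = H(n,k+1) − H(n,k). -/

import Mathlib

/-- The Wilf–Zeilberger certificate identity for the second Geode conjecture: with
`F(n,k) = (−1)^k · C(n,k) · C(an+1+k, (a−1)n+1+k)/(an+1+k)` and
`H(n,k) = −F(n,k) · k·((a−1)n+1+k)/(n·(an+1))`, we have `F(n,k) = H(n,k+1) − H(n,k)`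
for all natural numbers `k` and integers `a ≥ 1`, `n ≥ 1`. -/
theorem stmt_7 (a n : ℕ) (ha : 1 ≤ a) (hn : 1 ≤ n) (k : ℕ)
    (F H : ℕ → ℚ)
    (hF : ∀ j : ℕ, F j = (-1 : ℚ) ^ j * (n.choose j : ℚ) *
        ((a * n + 1 + j).choose ((a - 1) * n + 1 + j) : ℚ) / (a * n + 1 + j))
    (hH : ∀ j : ℕ, H j = -F j * ((j : ℚ) * (((a : ℚ) - 1) * n + 1 + j)) /
        ((n : ℚ) * ((a : ℚ) * n + 1))) :
    F k = H (k + 1) - H k := by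
  have h1 : ((n.choose (k+1) : ℚ)) * ((k : ℚ)+1) = (n.choose k : ℚ) * ((n : ℚ) - k) := by
    rcases le_or_gt k n with h | h
    · have hh := Nat.choose_succ_right_eq n k
      have h3 : ((n.choose (k+1) : ℚ)) * ((k:ℚ)+1) = (n.choose k : ℚ) * (((n - k : ℕ)) : ℚ) := by
        exact_mod_cast hh
      rw [Nat.cast_sub h] at h3; exact h3
    · rw [Nat.choose_eq_zero_of_lt h, Nat.choose_eq_zero_of_lt (by omega)]
      simp
  set A := a * n + 1 + k with hAdef
  set B := (a - 1) * n + 1 + k with hBdef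
  have h2 : ((A : ℚ) + 1) * (A.choose B : ℚ) = ((A+1).choose (B+1) : ℚ) * ((B : ℚ) + 1) := by
    have hh := Nat.add_one_mul_choose_eq A B
    exact_mod_cast hh
  have hAc : (A : ℚ) = (a : ℚ) * n + 1 + k := by push_cast [hAdef]; ring
  have hBc : (B : ℚ) = ((a : ℚ) - 1) * n + 1 + k := by
    push_cast [hBdef, Nat.cast_sub ha]; ring
  have hA' : a * n + 1 + (k + 1) = A + 1 := by omega
  have hB' : (a - 1) * n + 1 + (k + 1) = B + 1 := by omega
  rw [hAc, hBc] at h2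
  have hA0 : ((a:ℚ) * n + 1 + k) ≠ 0 := by positivity
  have hA1 : ((a:ℚ) * n + 1 + k) + 1 ≠ 0 := by positivity
  have hn0 : (n : ℚ) ≠ 0 := by positivity
  have han : (a : ℚ) * n + 1 ≠ 0 := by positivity
  rw [hH, hH, hF, hF, hA', hB', ← hAdef, ← hBdef]
  push_cast [pow_succ]
  set c0 := (n.choose k : ℚ)
  set c1 := (n.choose (k+1) : ℚ)
  set d0 := (A.choose B : ℚ)
  set d1 := ((A+1).choose (B+1) : ℚ)
  field_simp
  linear_combination
    (-(d1*((a:ℚ)*n+1+k)*(((a:ℚ)-1)*n+1+k+1))) * h1 +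
    (c0*((n:ℚ)-(k:ℚ))*((a:ℚ)*n+1+k)) * h2
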